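/- Fix positive integers n, a_1, …, a_n and a positive rational number q. The set of tuples (x_1, …, x_n) of positive integers satisfying a_1/x_1 + ⋯ + a_n/x_n = q is finite. -/
import Mathlib

open Finset

lemma aux_stmt6 {ι : Type*} [DecidableEq ι] (a : ι → ℕ) (ha : ∀ i, 0 < a i) :
    ∀ (s : Finset ι) (q : ℚ),
      {x : ι → ℕ | (∀ i ∉ s, x i = 0) ∧ (∀ i ∈ s, 0 < x i) ∧
        ∑ i ∈ s, (a i : ℚ) / (x i : ℚ) = q}.Finite := by
  intro s
  induction s using Finset.strongInduction with
  | _ s ih =>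
    intro q
    rcases s.eq_empty_or_nonempty with rfl | hs
    · apply Set.Finite.subset (Set.finite_singleton (fun _ => 0))
      rintro x ⟨h0, -, -⟩
      funext i
      exact h0 i (by simp)
    rcases le_or_gt q 0 with hq | hq
    · convert Set.finite_empty
      ext x
      simp only [Set.mem_setOf_eq, Set.mem_empty_iff_false, iff_false, not_and]
      intro _ hpos hsum
      have hlt : 0 < ∑ i ∈ s, (a i : ℚ) / (x i : ℚ) := by
        apply Finset.sum_pos _ hs
        intro i hi
        exact div_pos (by exact_mod_cast ha i) (by exact_mod_cast hpos i hi)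
      rw [hsum] at hlt
      linarith
    · set S := {x : ι → ℕ | (∀ i ∉ s, x i = 0) ∧ (∀ i ∈ s, 0 < x i) ∧
        ∑ i ∈ s, (a i : ℚ) / (x i : ℚ) = q} with hS
      set A : ℚ := ∑ i ∈ s, (a i : ℚ) with hA
      set B : ℕ := ⌊A / q⌋₊ with hB
      have key : ∀ i ∈ s, ∀ k : ℕ, 0 < k → {x | x ∈ S ∧ x i = k}.Finite := by
        intro i hi k hk
        have hserase : s.erase i ⊂ s := Finset.erase_ssubset hi
        have hfin := ih (s.erase i) hserase (q - (a i : ℚ) / (k : ℚ))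
        apply Set.Finite.of_finite_image (f := fun x => Function.update x i 0)
        · apply hfin.subset
          rintro y ⟨x, ⟨⟨h0, hpos, hsum⟩, hxi⟩, rfl⟩
          refine ⟨?_, ?_, ?_⟩
          · intro j hj
            rcases eq_or_ne j i with rfl | hne
            · simp [Function.update_self]
            · show Function.update x i 0 j = 0
              rw [Function.update_of_ne hne]
              exact h0 j (fun hjs => hj (Finset.mem_erase.mpr ⟨hne, hjs⟩))
          · intro j hj
            show 0 < Function.update x i 0 j
            rw [Function.update_of_ne (Finset.mem_erase.mp hj).1]
            exact hpos j (Finset.mem_erase.mp hj).2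
          · have hrw : ∑ j ∈ s.erase i, (a j : ℚ) / ((Function.update x i 0 j : ℕ) : ℚ)
                = ∑ j ∈ s.erase i, (a j : ℚ) / ((x j : ℕ) : ℚ) := by
              apply Finset.sum_congr rfl
              intro j hj
              rw [Function.update_of_ne (Finset.mem_erase.mp hj).1]
            rw [hrw]
            have := Finset.add_sum_erase s (fun j => (a j : ℚ) / (x j : ℚ)) hi
            rw [hsum] at this
            rw [← hxi]
            linarith
        · intro x hx y hy hxy
          funext j
          rcases eq_or_ne j i with rfl | hne
          · rw [hx.2, hy.2]
          · have h2 : Function.update x i 0 j = Function.update y i 0 j := congrFun hxy j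
            rwa [Function.update_of_ne hne, Function.update_of_ne hne] at h2
      apply Set.Finite.subset
        (Set.Finite.biUnion s.finite_toSet (fun i _ =>
          Set.Finite.biUnion (Set.finite_Icc 1 B) (fun k hk =>
            key i (by assumption) k hk.1)))
      · intro x hx
        obtain ⟨h0, hpos, hsum⟩ := hx
        -- find minimizer
        obtain ⟨i, hi, hmin⟩ := s.exists_min_image x hs
        have hxi : 0 < x i := hpos i hi
        have hxiQ : (0 : ℚ) < (x i : ℚ) := by exact_mod_cast hxi
        have hle : q ≤ A / (x i : ℚ) := by
          rw [← hsum, hA, Finset.sum_div]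
          apply Finset.sum_le_sum
          intro j hj
          apply div_le_div_of_nonneg_left (by exact_mod_cast (ha j).le) hxiQ
          exact_mod_cast hmin j hj
        have hxiB : x i ≤ B := by
          rw [hB]
          apply Nat.le_floor
          rw [le_div_iff₀ hq, mul_comm]
          exact (le_div_iff₀ hxiQ).mp hle
        refine Set.mem_biUnion hi ?_
        refine Set.mem_biUnion (⟨hxi, hxiB⟩ : x i ∈ Set.Icc 1 B) ?_
        exact ⟨⟨h0, hpos, hsum⟩, rfl⟩

theorem stmt_6 (n : ℕ) (hn : 0 < n) (a : Fin n → ℕ) (ha : ∀ i, 0 < a i)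
    (q : ℚ) (hq : 0 < q) :
    {x : Fin n → ℕ | (∀ i, 0 < x i) ∧ ∑ i, (a i : ℚ) / (x i : ℚ) = q}.Finite := by
  have h := aux_stmt6 a ha Finset.univ q
  apply h.subset
  rintro x ⟨hpos, hsum⟩
  exact ⟨fun i hi => absurd (Finset.mem_univ i) hi, fun i _ => hpos i, hsum⟩
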